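/- Let a, b : ℝ × ℝ → ℝ be continuously differentiable functions of (t, z), and define L : ℝ × ℝ² → ℝ by L(t, z, φ) = b(t, z) + 2a(t, z)cos(φ). For differentiable F, G : ℝ² → ℝ let {F, G}(z, φ) = (∂F/∂φ)(∂G/∂z) − (∂F/∂z)(∂G/∂φ), and let π_z(z,φ) = z. Then the double bracket equation ∂L/∂t(t, z, φ) = −{L(t,·,·), {L(t,·,·), π_z}}(z, φ) holds for all (t, z, φ) if and only if a and b satisfy the dispersionless Toda system: ∂a/∂t(t,z) = −a(t,z)·∂b/∂z(t,z) and ∂b/∂t(t,z) = −2·∂(a²)/∂z(t,z) for all (t, z). -/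

import Mathlib

open Real

/-- The Poisson bracket `{F, G} = (∂F/∂φ)(∂G/∂z) - (∂F/∂z)(∂G/∂φ)` on `ℝ²`
with coordinates `(z, φ)`, associated to the symplectic form `dz ∧ dφ`. -/
noncomputable def poissonBracket (F G : ℝ → ℝ → ℝ) (z φ : ℝ) : ℝ :=
  deriv (fun φ' => F z φ') φ * deriv (fun z' => G z' φ) z
    - deriv (fun z' => F z' φ) z * deriv (fun φ' => G z φ') φ

/-- For `L(t,z,φ) = b(t,z) + 2a(t,z)cos φ`, the double bracket equation
`∂L/∂t = -{L, {L, z}}` is equivalent to the dispersionless Toda system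
`∂a/∂t = -a ∂b/∂z`, `∂b/∂t = -2 ∂(a²)/∂z`. -/
theorem dispersionless_toda_iff_double_bracket (a b : ℝ × ℝ → ℝ)
    (ha : ContDiff ℝ 1 a) (hb : ContDiff ℝ 1 b) :
    (∀ t z φ : ℝ,
      deriv (fun t' => b (t', z) + 2 * a (t', z) * cos φ) t
        = -(poissonBracket (fun z' φ' => b (t, z') + 2 * a (t, z') * cos φ')
            (poissonBracket (fun z' φ' => b (t, z') + 2 * a (t, z') * cos φ')
              (fun z' _ => z')) z φ))
    ↔ (∀ t z : ℝ,
      deriv (fun t' => a (t', z)) t = -(a (t, z)) * deriv (fun z' => b (t, z')) z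
      ∧ deriv (fun t' => b (t', z)) t = -2 * deriv (fun z' => (a (t, z')) ^ 2) z) := by
  have da := ha.differentiable one_ne_zero
  have db := hb.differentiable one_ne_zero
  -- partial derivative differentiability
  have haz : ∀ t z : ℝ, DifferentiableAt ℝ (fun z' => a (t, z')) z := fun t z =>
    (da (t, z)).comp z ((differentiableAt_const t).prodMk differentiableAt_id)
  have hbz : ∀ t z : ℝ, DifferentiableAt ℝ (fun z' => b (t, z')) z := fun t z =>
    (db (t, z)).comp z ((differentiableAt_const t).prodMk differentiableAt_id)
  have hat : ∀ t z : ℝ, DifferentiableAt ℝ (fun t' => a (t', z)) t := fun t z =>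
    (da (t, z)).comp t (differentiableAt_id.prodMk (differentiableAt_const z))
  have hbt : ∀ t z : ℝ, DifferentiableAt ℝ (fun t' => b (t', z)) t := fun t z =>
    (db (t, z)).comp t (differentiableAt_id.prodMk (differentiableAt_const z))
  -- ∂φ L = -2 a sin φ
  have hLphi : ∀ t z φ : ℝ,
      deriv (fun φ' => b (t, z) + 2 * a (t, z) * cos φ') φ = -(2 * a (t, z) * sin φ) := by
    intro t z φ
    rw [deriv_const_add]
    have : (fun φ' => 2 * a (t, z) * cos φ') = fun φ' => (2 * a (t, z)) * cos φ' := rfl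
    rw [this, deriv_const_mul _ (Real.differentiable_cos φ), Real.deriv_cos]
    ring
  -- ∂z L = b_z + 2 a_z cos φ
  have hLz : ∀ t z φ : ℝ,
      deriv (fun z' => b (t, z') + 2 * a (t, z') * cos φ) z
        = deriv (fun z' => b (t, z')) z + 2 * deriv (fun z' => a (t, z')) z * cos φ := by
    intro t z φ
    have h1 : DifferentiableAt ℝ (fun z' => 2 * a (t, z') * cos φ) z := by
      exact (((haz t z).const_mul 2).mul_const (cos φ))
    rw [deriv_fun_add (hbz t z) h1]
    have : (fun z' => 2 * a (t, z') * cos φ) = fun z' => (fun z' => 2 * a (t, z')) z' * cos φ := rfl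
    rw [this, deriv_mul_const ((haz t z).const_mul 2), deriv_const_mul _ (haz t z)]
  -- inner bracket = -2 a sin φ
  have hinner : ∀ t z φ : ℝ,
      poissonBracket (fun z' φ' => b (t, z') + 2 * a (t, z') * cos φ')
        (fun z' _ => z') z φ = -(2 * a (t, z) * sin φ) := by
    intro t z φ
    unfold poissonBracket
    rw [hLphi t z φ]
    have h2 : deriv (fun z' : ℝ => z') z = 1 := deriv_id z
    have h3 : deriv (fun _ : ℝ => z) φ = 0 := deriv_const φ z
    rw [h2, h3]
    ring
  -- the double bracket equation, in explicit terms
  have hkey : ∀ t z φ : ℝ,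
      -(poissonBracket (fun z' φ' => b (t, z') + 2 * a (t, z') * cos φ')
          (poissonBracket (fun z' φ' => b (t, z') + 2 * a (t, z') * cos φ')
            (fun z' _ => z')) z φ)
        = -(4 * a (t, z) * deriv (fun z' => a (t, z')) z)
            - 2 * a (t, z) * deriv (fun z' => b (t, z')) z * cos φ := by
    intro t z φ
    have eI : poissonBracket (fun z' φ' => b (t, z') + 2 * a (t, z') * cos φ')
        (fun z' _ => z') = fun z' φ' => -(2 * a (t, z') * sin φ') := by
      funext z' φ'; exact hinner t z' φ'
    rw [eI]
    unfold poissonBracket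
    rw [hLphi t z φ, hLz t z φ]
    have d1 : deriv (fun φ' => -(2 * a (t, z) * sin φ')) φ = -(2 * a (t, z) * cos φ) := by
      have : (fun φ' => -(2 * a (t, z) * sin φ')) = fun φ' => (-(2 * a (t, z))) * sin φ' := by
        funext φ'; ring
      rw [this, deriv_const_mul _ (Real.differentiable_sin φ), Real.deriv_sin]
      ring
    have d2 : deriv (fun z' => -(2 * a (t, z') * sin φ)) z
        = -(2 * deriv (fun z' => a (t, z')) z * sin φ) := by
      have : (fun z' => -(2 * a (t, z') * sin φ)) = fun z' => a (t, z') * (-(2 * sin φ)) := by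
        funext z'; ring
      rw [this, deriv_mul_const (haz t z)]
      ring
    rw [d1, d2]
    have hpy := sin_sq_add_cos_sq φ
    linear_combination (-(4 * a (t, z) * deriv (fun z' => a (t, z')) z)) * hpy
  -- time derivative expansion
  have hLt : ∀ t z φ : ℝ,
      deriv (fun t' => b (t', z) + 2 * a (t', z) * cos φ) t
        = deriv (fun t' => b (t', z)) t + 2 * deriv (fun t' => a (t', z)) t * cos φ := by
    intro t z φ
    have h1 : DifferentiableAt ℝ (fun t' => 2 * a (t', z) * cos φ) t := by
      exact (((hat t z).const_mul 2).mul_const (cos φ))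
    rw [deriv_fun_add (hbt t z) h1]
    have : (fun t' => 2 * a (t', z) * cos φ) = fun t' => (fun t' => 2 * a (t', z)) t' * cos φ := rfl
    rw [this, deriv_mul_const ((hat t z).const_mul 2), deriv_const_mul _ (hat t z)]
  -- derivative of a²
  have hsq : ∀ t z : ℝ, deriv (fun z' => (a (t, z')) ^ 2) z
      = 2 * a (t, z) * deriv (fun z' => a (t, z')) z := by
    intro t z
    have := ((haz t z).hasDerivAt.fun_pow 2).deriv
    simpa using this
  constructor
  · intro h t z
    have h0 := h t z 0
    have h1 := h t z (Real.pi / 2)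
    rw [hLt, hkey] at h0 h1
    simp [Real.cos_pi_div_two] at h1
    simp at h0
    rw [hsq t z]
    constructor
    · nlinarith [h0, h1]
    · nlinarith [h1]
  · intro h t z φ
    obtain ⟨h1, h2⟩ := h t z
    rw [hLt, hkey, h1, h2, hsq t z]
    ring
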